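/- Let N ≥ 2 be an integer and x a fixed basis index. Then for all t ∈ ℝ, ⟨x| exp(−it·H_x²) |s⟩ = (1+1/√N)/2 − e^{−4it/N}·(1−1/√N)/2. Consequently, |⟨x| exp(−it·H_x²) |s⟩|² ≥ sin²(2t/N) for all 0 ≤ t ≤ (π/4)N, and exp(−i·(π/4)N·H_x²)|s⟩ = |x⟩. -/

import Mathlib

open Matrix

attribute [local instance] Matrix.linftyOpNormedRing Matrix.linftyOpNormedAlgebra

set_option maxHeartbeats 1000000 in

lemma exp_mulVec_eigen {n : ℕ} (A : Matrix (Fin n) (Fin n) ℂ) (v : Fin n → ℂ) (μ : ℂ)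
    (h : A *ᵥ v = μ • v) :
    NormedSpace.exp A *ᵥ v = Complex.exp μ • v := by
  have hpow : ∀ k : ℕ, A ^ k *ᵥ v = μ ^ k • v := by
    intro k; induction k with
    | zero => simp
    | succ k ih =>
      rw [pow_succ, ← Matrix.mulVec_mulVec, h, Matrix.mulVec_smul, ih, smul_smul, pow_succ']
  let L : Matrix (Fin n) (Fin n) ℂ →ₗ[ℂ] (Fin n → ℂ) :=
    { toFun := fun M => M *ᵥ v
      map_add' := fun M N => Matrix.add_mulVec M N v
      map_smul' := fun c M => Matrix.smul_mulVec c M v }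
  let L' : Matrix (Fin n) (Fin n) ℂ →L[ℂ] (Fin n → ℂ) :=
    { toLinearMap := L, cont := L.continuous_of_finiteDimensional }
  have h1 : NormedSpace.exp A *ᵥ v = L' (∑' k : ℕ, (((Nat.factorial k : ℂ))⁻¹ • A ^ k)) := by
    rw [NormedSpace.exp_eq_tsum (𝕂 := ℂ)]; rfl
  rw [h1, L'.map_tsum (NormedSpace.expSeries_summable' A)]
  have h2 : ∀ k : ℕ, L' (((Nat.factorial k : ℂ))⁻¹ • A ^ k) = (((Nat.factorial k : ℂ))⁻¹ • μ ^ k) • v := by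
    intro k
    show (((Nat.factorial k : ℂ))⁻¹ • A ^ k) *ᵥ v = _
    rw [Matrix.smul_mulVec, hpow, smul_smul, smul_eq_mul]
  simp_rw [h2]
  rw [(NormedSpace.expSeries_summable' μ).tsum_smul_const]
  congr 1
  rw [Complex.exp_eq_exp_ℂ, NormedSpace.exp_eq_tsum (𝕂 := ℂ)]

lemma vecMulVec_mulVec' {n : ℕ} (w u z : Fin n → ℂ) :
    Matrix.vecMulVec w u *ᵥ z = (u ⬝ᵥ z) • w := by
  funext i
  simp only [Matrix.mulVec, Matrix.vecMulVec_apply, dotProduct, Pi.smul_apply, smul_eq_mul,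
    Finset.sum_mul, Finset.mul_sum]
  exact Finset.sum_congr rfl fun j _ => by ring

lemma grover_ineq (r s cu cθ sθ : ℝ) (h1 : s^2 + cu^2 = 1) (h2 : sθ^2 + cθ^2 = 1)
    (hcθ : cθ = 2*cu^2 - 1) :
    s^2 ≤ ((1+r)/2 - cθ*((1-r)/2))^2 + (-(sθ*((1-r)/2)))^2 := by
  have hsθ2 : sθ^2 = 1 - cθ^2 := by linarith
  have hs2 : s^2 = 1 - cu^2 := by linarith
  have e : (-(sθ*((1-r)/2)))^2 = sθ^2 * ((1-r)/2)^2 := by ring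
  rw [e, hsθ2, hcθ, hs2]
  nlinarith [sq_nonneg (r*cu)]

set_option maxHeartbeats 1000000 in
/-- Time evolution under the square of the Grover Hamiltonian
`H_x = (1 + 1/√N)·I − |x⟩⟨x| − |s⟩⟨s|`:
`⟨x| exp(−it H_x²) |s⟩ = (1+1/√N)/2 − e^{−4it/N}(1−1/√N)/2`, hence
`|⟨x| exp(−it H_x²) |s⟩|² ≥ sin²(2t/N)` for `0 ≤ t ≤ (π/4)N`, and
`exp(−i(π/4)N·H_x²)|s⟩ = |x⟩`. -/
theorem grover_squared_time_evolution (N : ℕ) (hN : 2 ≤ N) (x : Fin N) :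
    let ketx : Fin N → ℂ := fun i => if i = x then 1 else 0
    let kets : Fin N → ℂ := fun _ => ((Real.sqrt N : ℝ) : ℂ)⁻¹
    let Hx : Matrix (Fin N) (Fin N) ℂ :=
      ((1 + (Real.sqrt N)⁻¹ : ℝ) : ℂ) • 1 -
        Matrix.vecMulVec ketx (star ketx) - Matrix.vecMulVec kets (star kets)
    (∀ t : ℝ,
      star ketx ⬝ᵥ ((NormedSpace.exp ((-Complex.I * (t : ℂ)) • (Hx ^ 2))) *ᵥ kets) =
        (((1 + (Real.sqrt N)⁻¹) / 2 : ℝ) : ℂ) -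
          Complex.exp (-4 * Complex.I * (t : ℂ) / (N : ℂ)) *
            (((1 - (Real.sqrt N)⁻¹) / 2 : ℝ) : ℂ)) ∧
    (∀ t : ℝ, 0 ≤ t → t ≤ Real.pi / 4 * N →
      Real.sin (2 * t / N) ^ 2 ≤
        ‖star ketx ⬝ᵥ ((NormedSpace.exp ((-Complex.I * (t : ℂ)) • (Hx ^ 2))) *ᵥ kets)‖ ^ 2) ∧
    ((NormedSpace.exp
        ((-Complex.I * ((Real.pi / 4 * N : ℝ) : ℂ)) • (Hx ^ 2))) *ᵥ kets = ketx) := by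
  intro ketx kets Hx
  have hN0 : (0:ℝ) < (N:ℝ) := by
    have : (2:ℝ) ≤ (N:ℝ) := by exact_mod_cast hN
    linarith
  have hNC : (N:ℂ) ≠ 0 := by
    exact_mod_cast Nat.cast_ne_zero.mpr (by omega)
  have hsq : (0:ℝ) < Real.sqrt N := Real.sqrt_pos.mpr hN0
  have hsC : ((Real.sqrt N : ℝ) : ℂ) ≠ 0 := by exact_mod_cast hsq.ne'
  set c : ℂ := ((Real.sqrt N : ℝ) : ℂ)⁻¹ with hc
  have hmul : ((Real.sqrt N : ℝ) : ℂ) * ((Real.sqrt N : ℝ) : ℂ) = (N:ℂ) := by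
    rw [← Complex.ofReal_mul, Real.mul_self_sqrt hN0.le]
    simp
  have hc2 : c ^ 2 = ((N:ℂ))⁻¹ := by
    rw [hc, pow_two, ← mul_inv, hmul]
  have hHxdef : Hx = ((1 + (Real.sqrt N)⁻¹ : ℝ) : ℂ) • 1 -
      Matrix.vecMulVec ketx (star ketx) - Matrix.vecMulVec kets (star kets) := rfl
  have ha : ((1 + (Real.sqrt N)⁻¹ : ℝ) : ℂ) = 1 + c := by
    rw [hc]; push_cast; ring
  have hstarx : star ketx = ketx := by
    funext j; by_cases h : j = x <;> simp [ketx, h]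
  have hstars : star kets = kets := by
    funext j; simp [kets, hc, ← Complex.ofReal_inv]
  have hxx : star ketx ⬝ᵥ ketx = 1 := by
    rw [hstarx]; simp [ketx, dotProduct]
  have hxs : star ketx ⬝ᵥ kets = c := by
    rw [hstarx]; simp [ketx, kets, dotProduct, hc]
  have hsx : star kets ⬝ᵥ ketx = c := by
    rw [hstars]; simp [ketx, kets, dotProduct, hc]
  have hss : star kets ⬝ᵥ kets = 1 := by
    rw [hstars]
    simp only [kets, dotProduct, ← hc]
    rw [Finset.sum_const, Finset.card_univ, Fintype.card_fin, nsmul_eq_mul, ← pow_two, hc2]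
    exact mul_inv_cancel₀ hNC
  have hxplus : star ketx ⬝ᵥ (ketx + kets) = 1 + c := by
    rw [dotProduct_add, hxx, hxs]
  have hxminus : star ketx ⬝ᵥ (ketx - kets) = 1 - c := by
    rw [dotProduct_sub, hxx, hxs]
  have hHx_x : Hx *ᵥ ketx = c • ketx - c • kets := by
    rw [hHxdef, Matrix.sub_mulVec, Matrix.sub_mulVec, Matrix.smul_mulVec,
      Matrix.one_mulVec, vecMulVec_mulVec', vecMulVec_mulVec', hxx, hsx, ha]
    module
  have hHx_s : Hx *ᵥ kets = c • kets - c • ketx := by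
    rw [hHxdef, Matrix.sub_mulVec, Matrix.sub_mulVec, Matrix.smul_mulVec,
      Matrix.one_mulVec, vecMulVec_mulVec', vecMulVec_mulVec', hxs, hss, ha]
    module
  have heig1 : Hx *ᵥ (ketx + kets) = 0 := by
    rw [Matrix.mulVec_add, hHx_x, hHx_s]; module
  have heig2 : Hx *ᵥ (ketx - kets) = (2*c) • (ketx - kets) := by
    rw [Matrix.mulVec_sub, hHx_x, hHx_s]; module
  have hA1 : ∀ t : ℝ, ((-Complex.I * (t:ℂ)) • (Hx ^ 2)) *ᵥ (ketx + kets)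
      = (0:ℂ) • (ketx + kets) := by
    intro t
    rw [Matrix.smul_mulVec, pow_two, ← Matrix.mulVec_mulVec, heig1, Matrix.mulVec_zero,
      smul_zero, zero_smul]
  have hA2 : ∀ t : ℝ, ((-Complex.I * (t:ℂ)) • (Hx ^ 2)) *ᵥ (ketx - kets)
      = (-4 * Complex.I * (t:ℂ) / (N:ℂ)) • (ketx - kets) := by
    intro t
    rw [Matrix.smul_mulVec, pow_two, ← Matrix.mulVec_mulVec, heig2, Matrix.mulVec_smul,
      heig2, smul_smul, smul_smul]
    congr 1
    have h4 : (2*c) * (2*c) = 4 * ((N:ℂ))⁻¹ := by rw [← hc2]; ring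
    rw [mul_assoc, h4, div_eq_mul_inv]
    ring
  have key : ∀ t : ℝ, (NormedSpace.exp ((-Complex.I * (t:ℂ)) • (Hx ^ 2))) *ᵥ kets
      = (2⁻¹:ℂ) • (ketx + kets)
        - (Complex.exp (-4 * Complex.I * (t:ℂ) / (N:ℂ)) * 2⁻¹) • (ketx - kets) := by
    intro t
    have e1 := exp_mulVec_eigen _ _ _ (hA1 t)
    have e2 := exp_mulVec_eigen _ _ _ (hA2 t)
    have hdecomp : kets = (2⁻¹:ℂ) • (ketx + kets) - (2⁻¹:ℂ) • (ketx - kets) := by module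
    calc (NormedSpace.exp ((-Complex.I * (t:ℂ)) • (Hx ^ 2))) *ᵥ kets
        = (NormedSpace.exp ((-Complex.I * (t:ℂ)) • (Hx ^ 2))) *ᵥ
            ((2⁻¹:ℂ) • (ketx + kets) - (2⁻¹:ℂ) • (ketx - kets)) := by rw [← hdecomp]
      _ = (2⁻¹:ℂ) • ((NormedSpace.exp ((-Complex.I * (t:ℂ)) • (Hx ^ 2))) *ᵥ (ketx + kets))
            - (2⁻¹:ℂ) • ((NormedSpace.exp ((-Complex.I * (t:ℂ)) • (Hx ^ 2))) *ᵥ (ketx - kets)) := by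
            rw [Matrix.mulVec_sub, Matrix.mulVec_smul, Matrix.mulVec_smul]
      _ = _ := by
            rw [e1, e2, Complex.exp_zero]
            module
  have hpart1 : ∀ t : ℝ,
      star ketx ⬝ᵥ ((NormedSpace.exp ((-Complex.I * (t : ℂ)) • (Hx ^ 2))) *ᵥ kets) =
        (((1 + (Real.sqrt N)⁻¹) / 2 : ℝ) : ℂ) -
          Complex.exp (-4 * Complex.I * (t : ℂ) / (N : ℂ)) *
            (((1 - (Real.sqrt N)⁻¹) / 2 : ℝ) : ℂ) := by
    intro t
    rw [key t, dotProduct_sub, dotProduct_smul, dotProduct_smul, hxplus, hxminus]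
    rw [hc]
    push_cast
    simp only [smul_eq_mul]
    ring
  refine ⟨hpart1, ?_, ?_⟩
  · intro t ht0 ht1
    rw [hpart1 t]
    have hθ : (-4 * Complex.I * (t:ℂ) / (N:ℂ)) = ((-4*t/(N:ℝ) : ℝ):ℂ) * Complex.I := by
      push_cast; ring
    have hval : (((1 + (Real.sqrt N)⁻¹) / 2 : ℝ) : ℂ) -
          Complex.exp (-4 * Complex.I * (t : ℂ) / (N : ℂ)) *
            (((1 - (Real.sqrt N)⁻¹) / 2 : ℝ) : ℂ)
        = Complex.ofReal ((1 + (Real.sqrt N)⁻¹) / 2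
              - Real.cos (-4*t/(N:ℝ)) * ((1 - (Real.sqrt N)⁻¹) / 2))
          + Complex.ofReal (-(Real.sin (-4*t/(N:ℝ)) * ((1 - (Real.sqrt N)⁻¹) / 2))) * Complex.I := by
      rw [hθ, Complex.exp_mul_I, ← Complex.ofReal_cos, ← Complex.ofReal_sin]
      push_cast
      ring
    rw [hval, Complex.sq_norm, Complex.normSq_add_mul_I]
    have hcθ : Real.cos (-4*t/(N:ℝ)) = 2 * Real.cos (2*t/(N:ℝ))^2 - 1 := by
      rw [show (-4*t/(N:ℝ)) = -(2*(2*t/(N:ℝ))) by ring, Real.cos_neg, Real.cos_two_mul]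
    have hs1 := Real.sin_sq_add_cos_sq (2*t/(N:ℝ))
    have hs2 := Real.sin_sq_add_cos_sq (-4*t/(N:ℝ))
    have hr0 : (0:ℝ) < (Real.sqrt N)⁻¹ := by positivity
    have hr1 : (Real.sqrt N)⁻¹ ≤ 1 := by
      have h1 : (1:ℝ) ≤ Real.sqrt N := by
        rw [show (1:ℝ) = Real.sqrt 1 by simp]
        have : (1:ℝ) ≤ (N:ℝ) := by exact_mod_cast (by omega : 1 ≤ N)
        exact Real.sqrt_le_sqrt this
      have hinv : (Real.sqrt N)⁻¹ * Real.sqrt N = 1 := inv_mul_cancel₀ hsq.ne'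
      nlinarith
    exact grover_ineq _ _ _ _ _ hs1 hs2 hcθ
  · rw [key (Real.pi / 4 * N)]
    have harg : (-4 * Complex.I * ((Real.pi / 4 * N : ℝ):ℂ) / (N:ℂ)) = -(Real.pi * Complex.I) := by
      push_cast
      field_simp
    rw [harg, Complex.exp_neg, Complex.exp_pi_mul_I]
    have hval : ((-1:ℂ))⁻¹ * 2⁻¹ = -2⁻¹ := by norm_num
    rw [hval]
    module
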